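/- With m_{i,j,k} defined as in the rescaling proposition for the octahedron recurrence (m_{i,j,0} = μ_{(i-j)/2}·ν_{(i+j)/2}, m_{i,j,1} = 1, m_{i,j,k} = ∏_{l=1}^{k-1} 1/(μ_{(i-j-k)/2+l}·ν_{(i+j-k)/2+l}) for k ≥ 2), one has m_{i-1,j,k}·m_{i+1,j,k} = m_{i,j-1,k}·m_{i,j+1,k} = m_{i,j,k-1}·m_{i,j,k+1} for all i+j+k odd with k ≥ 1. -/
import Mathlib


open scoped BigOperators

private lemma devron6_Psucc (f : ℤ → ℂ) (s : ℤ) (n : ℕ) :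
    ∏ l ∈ Finset.range (n + 1), (f (s + l))⁻¹
      = (∏ l ∈ Finset.range n, (f (s + l))⁻¹) * (f (s + n))⁻¹ :=
  Finset.prod_range_succ _ _

/-- The multipliers `m_{i,j,k}` of the octahedron-recurrence rescaling satisfy
`m_{i-1,j,k}·m_{i+1,j,k} = m_{i,j-1,k}·m_{i,j+1,k} = m_{i,j,k-1}·m_{i,j,k+1}`
for all `i+j+k` odd with `k ≥ 1`. -/
theorem devron_stmt_6
    (μ ν : ℤ → ℂ) (hμ : ∀ l, μ l ≠ 0) (hν : ∀ l, ν l ≠ 0)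
    (m : ℤ → ℤ → ℕ → ℂ)
    (hm0 : ∀ i j : ℤ, Even (i + j) → m i j 0 = μ ((i - j) / 2) * ν ((i + j) / 2))
    (hm1 : ∀ i j : ℤ, m i j 1 = 1)
    (hm2 : ∀ (i j : ℤ) (k : ℕ), 2 ≤ k →
      m i j k = ∏ l ∈ Finset.range (k - 1),
        (μ ((i - j - (k : ℤ)) / 2 + (l + 1)) * ν ((i + j - (k : ℤ)) / 2 + (l + 1)))⁻¹) :
    ∀ (i j : ℤ) (k : ℕ), Odd (i + j + (k + 1 : ℤ)) →
      m (i - 1) j (k + 1) * m (i + 1) j (k + 1) = m i (j - 1) (k + 1) * m i (j + 1) (k + 1) ∧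
      m i (j - 1) (k + 1) * m i (j + 1) (k + 1) = m i j k * m i j (k + 2) := by
  have hm2' : ∀ (i j : ℤ) (k : ℕ), 1 ≤ k →
      m i j k = ∏ l ∈ Finset.range (k - 1),
        (μ ((i - j - (k : ℤ)) / 2 + (l + 1)) * ν ((i + j - (k : ℤ)) / 2 + (l + 1)))⁻¹ := by
    intro i j k hk
    match k, hk with
    | 1, _ => simpa using hm1 i j
    | (k+2), _ => exact hm2 i j (k+2) (by omega)
  have conv : ∀ (p q A B : ℤ) (N : ℕ), p / 2 + 1 = A → q / 2 + 1 = B →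
      ∏ l ∈ Finset.range N, (μ (p / 2 + (l + 1)) * ν (q / 2 + (l + 1)))⁻¹
        = (∏ l ∈ Finset.range N, (μ (A + l))⁻¹) *
          (∏ l ∈ Finset.range N, (ν (B + l))⁻¹) := by
    intro p q A B N hA hB
    rw [← Finset.prod_mul_distrib]
    refine Finset.prod_congr rfl fun l _ => ?_
    rw [mul_inv, show p / 2 + ((l : ℤ) + 1) = A + l by omega,
      show q / 2 + ((l : ℤ) + 1) = B + l by omega]
  intro i j k hodd
  match k, hodd with
  | 0, hodd =>
    have he : Even (i + j) := by
      obtain ⟨t, ht⟩ := hodd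
      exact ⟨t, by push_cast at ht; omega⟩
    have hd : Even (i - j) := by
      obtain ⟨t, ht⟩ := he; exact ⟨t - j, by omega⟩
    obtain ⟨c, hc⟩ := id hd
    obtain ⟨d, hd'⟩ := id he
    constructor
    · simp [hm1]
    · rw [hm1, hm1, hm0 i j he, hm2 i j 2 le_rfl]
      rw [show (2:ℕ)-1 = 1 from rfl, Finset.prod_range_one]
      push_cast
      rw [show (i - j - 2) / 2 + 1 = (i - j) / 2 by omega,
        show (i + j - 2) / 2 + 1 = (i + j) / 2 by omega, one_mul]
      rw [mul_inv_cancel₀ (mul_ne_zero (hμ _) (hν _))]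
  | (n+1), hodd =>
    have hpar : ∃ a b : ℤ, i - j - (n + 1) = 2 * a ∧ i + j - (n + 1) = 2 * b := by
      obtain ⟨t, ht⟩ := hodd
      push_cast at ht
      exact ⟨(i - j - (n + 1)) / 2, (i + j - (n + 1)) / 2, by omega, by omega⟩
    obtain ⟨a, b, ha, hb⟩ := hpar
    rw [hm2' (i-1) j (n+2) (by omega), hm2' (i+1) j (n+2) (by omega),
      hm2' i (j-1) (n+2) (by omega), hm2' i (j+1) (n+2) (by omega),
      hm2' i j (n+1) (by omega), hm2' i j (n+3) (by omega)]
    rw [conv _ _ a b _ (by push_cast; omega) (by push_cast; omega),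
      conv _ _ (a+1) (b+1) _ (by push_cast; omega) (by push_cast; omega),
      conv _ _ (a+1) b _ (by push_cast; omega) (by push_cast; omega),
      conv _ _ a (b+1) _ (by push_cast; omega) (by push_cast; omega),
      conv _ _ (a+1) (b+1) _ (by push_cast; omega) (by push_cast; omega),
      conv _ _ a b _ (by push_cast; omega) (by push_cast; omega)]
    constructor
    · ring
    · show _ = _ * (_ * _)
      rw [show (n+3) - 1 = (n+1) + 1 from rfl, show (n+2) - 1 = n + 1 from rfl,
        show (n+1) - 1 = n from rfl]
      rw [devron6_Psucc μ a (n+1), devron6_Psucc ν b (n+1),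
        devron6_Psucc μ (a+1) n, devron6_Psucc ν (b+1) n]
      rw [show a + ((n+1 : ℕ) : ℤ) = a + 1 + (n : ℤ) by push_cast; ring,
        show b + ((n+1 : ℕ) : ℤ) = b + 1 + (n : ℤ) by push_cast; ring]
      ring
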